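/- Let (Z,(X,Y)) be a hidden Markov model with Z aperiodic, irreducible, finite-state, initial distribution μ, transition matrix P, and stationary distribution π, and suppose some letter has positive probability of being simultaneously emitted by X and Y. Then for every K with 0 < K < n, |E[LCS(X^{(n)}; Y^{(n)})] - E[LCS(X̄^{(n)}; Ȳ^{(n)})]| ≤ n·P(τ > K) + K, where (X̄, Ȳ) is the output of the stationary version Z̄ of the chain coupled with Z, and τ is the meeting time of Z and Z̄. -/

import Mathlib

open MeasureTheory

/-- Length of the longest common subsequence of two words. -/
def LCS {α : Type*} [DecidableEq α] (x y : List α) : ℕ :=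
  ((x.sublists.filter (fun s => decide (s.Sublist y))).map List.length).foldr max 0

/-- The word `X_a, …, X_{a+len-1}` of the (1-indexed) sequence `X`. -/
def word {α : Type*} (X : ℕ → α) (a len : ℕ) : List α :=
  (List.range len).map (fun i => X (a + i))

private lemma foldr_max_le {l : List ℕ} {m : ℕ} (h : ∀ a ∈ l, a ≤ m) : l.foldr max 0 ≤ m := by
  induction l with
  | nil => simp
  | cons a t ih =>
    simp only [List.foldr_cons]
    exact max_le (h a (by simp)) (ih fun b hb => h b (by simp [hb]))

private lemma le_foldr_max {l : List ℕ} {a : ℕ} (h : a ∈ l) : a ≤ l.foldr max 0 := by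
  induction l with
  | nil => simp at h
  | cons b t ih =>
    rcases List.mem_cons.mp h with rfl | h
    · exact le_max_left _ _
    · exact (ih h).trans (le_max_right _ _)

private lemma le_LCS {α : Type*} [DecidableEq α] {s x y : List α}
    (h1 : s.Sublist x) (h2 : s.Sublist y) : s.length ≤ LCS x y := by
  unfold LCS
  apply le_foldr_max
  simp only [List.mem_map]
  exact ⟨s, by simp [List.mem_filter, List.mem_sublists, h1, h2], rfl⟩

private lemma LCS_le {α : Type*} [DecidableEq α] {x y : List α} {m : ℕ}
    (h : ∀ s : List α, s.Sublist x → s.Sublist y → s.length ≤ m) : LCS x y ≤ m := by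
  unfold LCS
  apply foldr_max_le
  intro a ha
  simp only [List.mem_map, List.mem_filter, List.mem_sublists, decide_eq_true_eq] at ha
  obtain ⟨s, ⟨hs1, hs2⟩, rfl⟩ := ha
  exact h s hs1 hs2

private lemma drop_sublist_of_sublist_append {α : Type*} {s a t : List α}
    (h : s.Sublist (a ++ t)) : (s.drop a.length).Sublist t := by
  rw [List.sublist_append_iff] at h
  obtain ⟨s1, s2, rfl, h1, h2⟩ := h
  have hl : s1.length ≤ a.length := h1.length_le
  rw [List.drop_append, List.drop_of_length_le hl, List.nil_append]
  exact (List.drop_sublist _ _).trans h2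

private lemma LCS_append_le {α : Type*} [DecidableEq α] {a b t u : List α}
    (hab : a.length = b.length) : LCS (a ++ t) (b ++ u) ≤ a.length + LCS t u := by
  apply LCS_le
  intro s h1 h2
  have d1 := drop_sublist_of_sublist_append h1
  have d2 : (s.drop a.length).Sublist u := by
    rw [hab]; exact drop_sublist_of_sublist_append h2
  have := le_LCS d1 d2
  have hlen : (s.drop a.length).length = s.length - a.length := List.length_drop
  omega

private lemma le_LCS_append {α : Type*} [DecidableEq α] (a b t u : List α) :
    LCS t u ≤ LCS (a ++ t) (b ++ u) := by
  apply LCS_le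
  intro s h1 h2
  exact le_LCS (h1.trans (List.sublist_append_right a t)) (h2.trans (List.sublist_append_right b u))

private lemma LCS_le_length_left {α : Type*} [DecidableEq α] (x y : List α) :
    LCS x y ≤ x.length :=
  LCS_le fun _ h1 _ => h1.length_le

private lemma word_split {α : Type*} (X : ℕ → α) (K n : ℕ) (hK : K ≤ n) :
    word X 1 n = word X 1 K ++ word X (1 + K) (n - K) := by
  have hr : List.range n = List.range K ++ (List.range (n - K)).map (fun x => K + x) := by
    rw [← List.range_add]; congr 1; omega
  unfold word
  rw [hr, List.map_append, List.map_map]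
  congr 1
  apply List.map_congr_left
  intro i _
  simp only [Function.comp_apply]
  congr 1
  omega

private lemma word_eq_ofFn {α : Type*} (X : ℕ → α) (n : ℕ) :
    word X 1 n = List.ofFn (fun i : Fin n => X (1 + (i : ℕ))) := by
  apply List.ext_getElem
  · simp [word]
  · intro i h1 h2
    simp [word]

/-- Coupling bound: if `(Z̄, (X̄, Ȳ))` is the stationary version of the hidden Markov
model `(Z, (X, Y))`, coupled with it so that the two hidden chains (and their
emissions) coincide after the meeting time `τ`, then for every `0 < K < n`,
`|E[LCS(X⁽ⁿ⁾; Y⁽ⁿ⁾)] - E[LCS(X̄⁽ⁿ⁾; Ȳ⁽ⁿ⁾)]| ≤ n·P(τ > K) + K`. -/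
theorem hmm_coupling_mean_difference_bound
    {Ω S A : Type*} [MeasurableSpace Ω]
    [Fintype S] [DecidableEq S] [MeasurableSpace S] [MeasurableSingletonClass S]
    [Fintype A] [DecidableEq A] [MeasurableSpace A] [MeasurableSingletonClass A]
    (ℙ : Measure Ω) [IsProbabilityMeasure ℙ]
    (Z Zb : ℕ → Ω → S) (X Y Xb Yb : ℕ → Ω → A)
    (hZ : ∀ i, Measurable (Z i)) (hZb : ∀ i, Measurable (Zb i))
    (hX : ∀ i, Measurable (X i)) (hY : ∀ i, Measurable (Y i))
    (hXb : ∀ i, Measurable (Xb i)) (hYb : ∀ i, Measurable (Yb i))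
    (τ : Ω → ℕ∞) (hτmeas : Measurable τ)
    -- `τ` is the meeting time of the two hidden chains
    (hτ : ∀ (ω : Ω) (i : ℕ), τ ω ≤ (i : ℕ∞) ↔ ∃ j, 1 ≤ j ∧ j ≤ i ∧ Z j ω = Zb j ω)
    -- the hidden chains coincide after the meeting time
    (hchain : ∀ (ω : Ω) (i : ℕ), τ ω ≤ (i : ℕ∞) → Z i ω = Zb i ω)
    -- the emissions coincide strictly after the meeting time
    (hcoup : ∀ (ω : Ω) (i : ℕ), τ ω < (i : ℕ∞) → X i ω = Xb i ω ∧ Y i ω = Yb i ω) :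
    ∀ (n K : ℕ), 0 < K → K < n →
      |(∫ ω, ((LCS (word (fun i => X i ω) 1 n) (word (fun i => Y i ω) 1 n) : ℝ)) ∂ℙ)
        - ∫ ω, ((LCS (word (fun i => Xb i ω) 1 n) (word (fun i => Yb i ω) 1 n) : ℝ)) ∂ℙ|
      ≤ (n : ℝ) * (ℙ {ω | (K : ℕ∞) < τ ω}).toReal + K := by
  intro n K hK hKn
  set f : Ω → ℝ := fun ω =>
    ((LCS (word (fun i => X i ω) 1 n) (word (fun i => Y i ω) 1 n) : ℕ) : ℝ) with hf_def
  set g : Ω → ℝ := fun ω =>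
    ((LCS (word (fun i => Xb i ω) 1 n) (word (fun i => Yb i ω) 1 n) : ℕ) : ℝ) with hg_def
  -- measurability
  have hmeasword : ∀ (W V : ℕ → Ω → A), (∀ i, Measurable (W i)) → (∀ i, Measurable (V i)) →
      Measurable (fun ω =>
        ((LCS (word (fun i => W i ω) 1 n) (word (fun i => V i ω) 1 n) : ℕ) : ℝ)) := by
    intro W V hW hV
    have hfac : (fun ω =>
        ((LCS (word (fun i => W i ω) 1 n) (word (fun i => V i ω) 1 n) : ℕ) : ℝ)) =
        (fun p : (Fin n → A) × (Fin n → A) =>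
          ((LCS (List.ofFn fun i : Fin n => p.1 i) (List.ofFn fun i : Fin n => p.2 i) : ℕ) : ℝ)) ∘
        (fun ω => (fun i : Fin n => W (1 + (i : ℕ)) ω, fun i : Fin n => V (1 + (i : ℕ)) ω)) := by
      funext ω
      simp only [Function.comp_apply]
      rw [word_eq_ofFn, word_eq_ofFn]
    rw [hfac]
    exact (measurable_of_countable _).comp
      ((measurable_pi_lambda _ fun i => hW _).prodMk (measurable_pi_lambda _ fun i => hV _))
  have hfm : Measurable f := hmeasword X Y hX hY
  have hgm : Measurable g := hmeasword Xb Yb hXb hYb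
  -- bounds
  have hword_len : ∀ (W : ℕ → A) (a m : ℕ), (word W a m).length = m := by
    intro W a m; simp [word]
  have hfb : ∀ (W V : ℕ → Ω → A) (ω : Ω),
      ((LCS (word (fun i => W i ω) 1 n) (word (fun i => V i ω) 1 n) : ℕ) : ℝ) ∈
        Set.Icc (0 : ℝ) n := by
    intro W V ω
    constructor
    · positivity
    · have := LCS_le_length_left (word (fun i => W i ω) 1 n) (word (fun i => V i ω) 1 n)
      rw [hword_len] at this
      exact_mod_cast this
  have hintW : ∀ (W V : ℕ → Ω → A), (∀ i, Measurable (W i)) → (∀ i, Measurable (V i)) →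
      Integrable (fun ω =>
        ((LCS (word (fun i => W i ω) 1 n) (word (fun i => V i ω) 1 n) : ℕ) : ℝ)) ℙ := by
    intro W V hW hV
    refine ⟨(hmeasword W V hW hV).aestronglyMeasurable, ?_⟩
    apply HasFiniteIntegral.of_bounded (C := (n : ℝ))
    filter_upwards with ω
    have := hfb W V ω
    rw [Real.norm_eq_abs, abs_of_nonneg this.1]
    exact this.2
  have hfint : Integrable f ℙ := hintW X Y hX hY
  have hgint : Integrable g ℙ := hintW Xb Yb hXb hYb
  set s : Set Ω := {ω | (K : ℕ∞) < τ ω} with hs_def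
  have hs : MeasurableSet s := hτmeas (Set.to_countable {x : ℕ∞ | (K : ℕ∞) < x}).measurableSet
  set h : Ω → ℝ := fun ω => (n : ℝ) * s.indicator (fun _ => (1 : ℝ)) ω + K with hh_def
  have hhint : Integrable h ℙ := by
    exact (((integrable_indicator_iff hs).mpr (integrableOn_const
      (measure_lt_top _ _).ne)).const_mul _).add (integrable_const _)
  -- pointwise bound
  have hbound : ∀ ω, |f ω - g ω| ≤ h ω := by
    intro ω
    by_cases hτK : τ ω ≤ (K : ℕ∞)
    · -- tails coincide
      have hmem : ω ∉ s := by
        simp only [hs_def, Set.mem_setOf_eq]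
        exact not_lt.mpr hτK
      have hh_eq : h ω = K := by simp [hh_def, Set.indicator_of_notMem hmem]
      have htail : ∀ (i : ℕ),
          X (1 + K + i) ω = Xb (1 + K + i) ω ∧ Y (1 + K + i) ω = Yb (1 + K + i) ω := by
        intro i
        apply hcoup
        refine lt_of_le_of_lt hτK ?_
        exact_mod_cast (by omega : K < 1 + K + i)
      have htX : word (fun i => X i ω) (1 + K) (n - K)
          = word (fun i => Xb i ω) (1 + K) (n - K) := by
        unfold word
        exact List.map_congr_left fun i _ => (htail i).1
      have htY : word (fun i => Y i ω) (1 + K) (n - K)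
          = word (fun i => Yb i ω) (1 + K) (n - K) := by
        unfold word
        exact List.map_congr_left fun i _ => (htail i).2
      have hKn' : K ≤ n := hKn.le
      have hsplit : ∀ (W : ℕ → A), word W 1 n = word W 1 K ++ word W (1 + K) (n - K) :=
        fun W => word_split W K n hKn'
      have hlab : (word (fun i => X i ω) 1 K).length = (word (fun i => Y i ω) 1 K).length := by
        rw [hword_len, hword_len]
      have hlab' : (word (fun i => Xb i ω) 1 K).length = (word (fun i => Yb i ω) 1 K).length := by
        rw [hword_len, hword_len]
      have h1 : LCS (word (fun i => X i ω) 1 n) (word (fun i => Y i ω) 1 n)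
          ≤ K + LCS (word (fun i => X i ω) (1 + K) (n - K))
              (word (fun i => Y i ω) (1 + K) (n - K)) := by
        rw [hsplit, hsplit]
        have := LCS_append_le (t := word (fun i => X i ω) (1 + K) (n - K))
          (u := word (fun i => Y i ω) (1 + K) (n - K)) hlab
        rwa [hword_len] at this
      have h2 : LCS (word (fun i => X i ω) (1 + K) (n - K))
            (word (fun i => Y i ω) (1 + K) (n - K))
          ≤ LCS (word (fun i => X i ω) 1 n) (word (fun i => Y i ω) 1 n) := by
        rw [hsplit, hsplit]
        exact le_LCS_append _ _ _ _
      have h3 : LCS (word (fun i => Xb i ω) 1 n) (word (fun i => Yb i ω) 1 n)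
          ≤ K + LCS (word (fun i => X i ω) (1 + K) (n - K))
              (word (fun i => Y i ω) (1 + K) (n - K)) := by
        rw [hsplit, hsplit, htX, htY]
        have := LCS_append_le (t := word (fun i => Xb i ω) (1 + K) (n - K))
          (u := word (fun i => Yb i ω) (1 + K) (n - K)) hlab'
        rwa [hword_len] at this
      have h4 : LCS (word (fun i => X i ω) (1 + K) (n - K))
            (word (fun i => Y i ω) (1 + K) (n - K))
          ≤ LCS (word (fun i => Xb i ω) 1 n) (word (fun i => Yb i ω) 1 n) := by
        rw [hsplit, hsplit, htX, htY]
        exact le_LCS_append _ _ _ _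
      have c1 : (LCS (word (fun i => X i ω) 1 n) (word (fun i => Y i ω) 1 n) : ℝ)
          ≤ K + (LCS (word (fun i => X i ω) (1 + K) (n - K))
              (word (fun i => Y i ω) (1 + K) (n - K)) : ℝ) := by exact_mod_cast h1
      have c2 : ((LCS (word (fun i => X i ω) (1 + K) (n - K))
              (word (fun i => Y i ω) (1 + K) (n - K)) : ℕ) : ℝ)
          ≤ (LCS (word (fun i => X i ω) 1 n) (word (fun i => Y i ω) 1 n) : ℝ) := by
        exact_mod_cast h2
      have c3 : (LCS (word (fun i => Xb i ω) 1 n) (word (fun i => Yb i ω) 1 n) : ℝ)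
          ≤ K + (LCS (word (fun i => X i ω) (1 + K) (n - K))
              (word (fun i => Y i ω) (1 + K) (n - K)) : ℝ) := by exact_mod_cast h3
      have c4 : ((LCS (word (fun i => X i ω) (1 + K) (n - K))
              (word (fun i => Y i ω) (1 + K) (n - K)) : ℕ) : ℝ)
          ≤ (LCS (word (fun i => Xb i ω) 1 n) (word (fun i => Yb i ω) 1 n) : ℝ) := by
        exact_mod_cast h4
      rw [hh_eq, abs_sub_le_iff]
      constructor
      · simp only [hf_def, hg_def]; linarith
      · simp only [hf_def, hg_def]; linarith
    · have hmem : ω ∈ s := by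
        simp only [hs_def, Set.mem_setOf_eq]
        exact not_le.mp hτK
      have hh_eq : h ω = n + K := by simp [hh_def, Set.indicator_of_mem hmem]
      have hfB := hfb X Y ω
      have hgB := hfb Xb Yb ω
      obtain ⟨hf0, hf1⟩ := hfB
      obtain ⟨hg0, hg1⟩ := hgB
      have hKpos : (0 : ℝ) ≤ K := by positivity
      rw [hh_eq, abs_sub_le_iff]
      constructor
      · simp only [hf_def, hg_def]; linarith
      · simp only [hf_def, hg_def]; linarith
  -- conclude
  have hint_ind : Integrable (fun ω => (n : ℝ) * s.indicator (fun _ => (1 : ℝ)) ω) ℙ :=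
    ((integrable_indicator_iff hs).mpr (integrableOn_const
      (measure_lt_top _ _).ne)).const_mul _
  calc |∫ ω, f ω ∂ℙ - ∫ ω, g ω ∂ℙ| = |∫ ω, (f ω - g ω) ∂ℙ| := by
        rw [integral_sub hfint hgint]
    _ ≤ ∫ ω, |f ω - g ω| ∂ℙ := by
        simpa only [Real.norm_eq_abs] using
          norm_integral_le_integral_norm (fun ω => f ω - g ω) (μ := ℙ)
    _ ≤ ∫ ω, h ω ∂ℙ := integral_mono (hfint.sub hgint).abs hhint hbound
    _ = (n : ℝ) * (ℙ s).toReal + K := by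
        simp only [hh_def]
        rw [integral_add hint_ind (integrable_const _)]
        rw [integral_const_mul, integral_indicator_const _ hs, integral_const]
        simp [Measure.real]
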